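/- There is a well-defined injective homomorphism of ℚ-algebras σ : ℚ[X]^W → (ℚ[W\W̃/W], *_W) such that σ(Av_W(λ)) = 1_{WλW} for every λ ∈ X, where 1_{WλW} is the indicator function of the double coset W·λ·W ⊆ W̃. (Uniqueness holds since the orbit sums Av_W(λ) span ℚ[X]^W.) -/

import Mathlib

/-- `f ∈ ℚ[H\W̃/K]`: `f : W̃ → ℚ` is finitely supported, left `H`-invariant and right
`K`-invariant. -/
def IsBiInvariant {G : Type*} [Group G] (H K : Subgroup G) (f : G → ℚ) : Prop :=
  (Function.support f).Finite ∧ ∀ h ∈ H, ∀ k ∈ K, ∀ w : G, f (h * w * k) = f w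

/-- The convolution `(f₁ *_Q f₂)(w̃) = ∑_{ṽQ ∈ W̃/Q} f₁(ṽ)·f₂(ṽ⁻¹·w̃)`, computed with the
representatives `Quotient.out c` of the left cosets. -/
noncomputable def dcConv {G : Type*} [Group G] (Q : Subgroup G) (f₁ f₂ : G → ℚ) : G → ℚ :=
  fun w => ∑ᶠ c : G ⧸ Q, f₁ (Quotient.out c) * f₂ ((Quotient.out c)⁻¹ * w)

variable {X : Type*} [AddCommGroup X] {W : Type*} [Group W]

/-- A `W`-invariant element of the group algebra `ℚ[X]` (realized as
`MonoidAlgebra ℚ (Multiplicative X)`, with `W` acting through `φ`). -/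
def WInvariant (φ : W →* MulAut (Multiplicative X))
    (p : MonoidAlgebra ℚ (Multiplicative X)) : Prop :=
  ∀ (w : W) (x : Multiplicative X), p.coeff (φ w x) = p.coeff x

/-- The orbit sum `Av_W(λ) = ∑_{λ' ∈ W·λ} λ' ∈ ℚ[X]^W`. -/
noncomputable def AvW (φ : W →* MulAut (Multiplicative X)) (lam : X) :
    MonoidAlgebra ℚ (Multiplicative X) :=
  ∑ᶠ μ ∈ {μ : Multiplicative X | ∃ w : W, φ w (Multiplicative.ofAdd lam) = μ},
    MonoidAlgebra.single μ (1 : ℚ)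

/-- The copy of `W` inside `W̃ = X ⋊ W`. -/
def Wsub (φ : W →* MulAut (Multiplicative X)) : Subgroup (Multiplicative X ⋊[φ] W) :=
  (SemidirectProduct.inr : W →* Multiplicative X ⋊[φ] W).range

/-- `1_{WλW}`, the indicator function of the double coset `W·λ·W ⊆ W̃ = X ⋊ W`. -/
noncomputable def dcIndicator (φ : W →* MulAut (Multiplicative X)) (lam : X) :
    (Multiplicative X ⋊[φ] W) → ℚ :=
  Set.indicator {wt : Multiplicative X ⋊[φ] W | ∃ a b : W,
    wt = SemidirectProduct.inr a * SemidirectProduct.inl (Multiplicative.ofAdd lam) *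
      SemidirectProduct.inr b} 1

section Aux
open SemidirectProduct

variable (φ : W →* MulAut (Multiplicative X))

lemma mem_Wsub (g : Multiplicative X ⋊[φ] W) : g ∈ Wsub φ ↔ g.left = 1 := by
  constructor
  · rintro ⟨w, rfl⟩; simp
  · intro h; exact ⟨g.right, by ext <;> simp [h]⟩

lemma left_out (g : Multiplicative X ⋊[φ] W) :
    (Quotient.out ((g : (Multiplicative X ⋊[φ] W) ⧸ Wsub φ)) ).left = g.left := by
  have h : g⁻¹ * Quotient.out ((g : (Multiplicative X ⋊[φ] W) ⧸ Wsub φ)) ∈ Wsub φ := by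
    rw [← QuotientGroup.eq]
    exact (Quotient.out_eq _).symm
  rw [mem_Wsub] at h
  simp only [mul_left, inv_left, inv_right] at h
  have h2 : φ g.right⁻¹ (g.left⁻¹ * (Quotient.out (↑g : (Multiplicative X ⋊[φ] W) ⧸ Wsub φ)).left) = 1 := by
    rw [map_mul]; exact h
  have h3 := (φ g.right⁻¹).injective (h2.trans (map_one (φ g.right⁻¹)).symm)
  have := inv_mul_eq_one.mp h3
  exact this.symm


/-- the orbit set -/
def Sorb (lam : X) : Set (Multiplicative X) :=
  {μ : Multiplicative X | ∃ w : W, φ w (Multiplicative.ofAdd lam) = μ}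

lemma Sorb_finite [Finite W] (lam : X) : (Sorb φ lam).Finite := by
  have : Sorb φ lam = Set.range (fun w : W => φ w (Multiplicative.ofAdd lam)) := by
    ext μ; simp [Sorb, Set.mem_range]
  rw [this]; exact Set.finite_range _

lemma mem_Sorb_iff (lam : X) (w : W) (μ : Multiplicative X) :
    φ w μ ∈ Sorb φ lam ↔ μ ∈ Sorb φ lam := by
  constructor
  · rintro ⟨v, hv⟩
    refine ⟨w⁻¹ * v, ?_⟩
    have : φ w (φ (w⁻¹ * v) (Multiplicative.ofAdd lam)) = φ w μ := by
      rw [← MulAut.mul_apply, ← map_mul]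
      simpa [mul_assoc] using hv
    exact (φ w).injective this
  · rintro ⟨v, hv⟩
    exact ⟨w * v, by rw [map_mul]; simp [MulAut.mul_apply, hv]⟩

open Classical in
lemma AvW_apply [Finite W] (lam : X) (x : Multiplicative X) :
    (AvW φ lam).coeff x = if x ∈ Sorb φ lam then 1 else 0 := by
  classical
  have hfin := Sorb_finite φ lam
  rw [AvW, show {μ : Multiplicative X | ∃ w : W, φ w (Multiplicative.ofAdd lam) = μ} = Sorb φ lam from rfl,
    finsum_mem_eq_finite_toFinset_sum _ hfin]
  rw [MonoidAlgebra.coeff_sum, Finset.sum_apply']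
  simp only [MonoidAlgebra.single_apply]
  rw [Finset.sum_ite_eq' hfin.toFinset x (fun _ => (1:ℚ))]
  simp [Set.Finite.mem_toFinset]

lemma AvW_invariant [Finite W] (lam : X) : WInvariant φ (AvW φ lam) := by
  intro w x
  classical
  rw [AvW_apply, AvW_apply, if_congr (mem_Sorb_iff φ lam w x) rfl rfl]

lemma self_mem_Sorb (lam : X) : (Multiplicative.ofAdd lam) ∈ Sorb φ lam :=
  ⟨1, by simp⟩

lemma invariant_const_on_Sorb (p : MonoidAlgebra ℚ (Multiplicative X)) (hp : WInvariant φ p)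
    {lam : X} {y : Multiplicative X} (hy : y ∈ Sorb φ lam) :
    p.coeff y = p.coeff (Multiplicative.ofAdd lam) := by
  obtain ⟨w, rfl⟩ := hy; exact hp w _

lemma e_bij : Function.Bijective
    (fun c : (Multiplicative X ⋊[φ] W) ⧸ Wsub φ => (Quotient.out c).left) := by
  constructor
  · intro c₁ c₂ h
    rw [← Quotient.out_eq c₁, ← Quotient.out_eq c₂]
    refine Quotient.sound (QuotientGroup.leftRel_apply.mpr ?_)
    rw [mem_Wsub]
    simp only [mul_left, inv_left, inv_right]
    rw [← map_mul]
    simp [h]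
  · intro x
    exact ⟨(inl x : Multiplicative X ⋊[φ] W), by simpa using left_out φ (inl x)⟩


noncomputable def sig (p : MonoidAlgebra ℚ (Multiplicative X)) :
    (Multiplicative X ⋊[φ] W) → ℚ := fun wt => p.coeff wt.left

lemma conv_eq [Finite W] (p q : MonoidAlgebra ℚ (Multiplicative X)) (hq : WInvariant φ q) :
    dcConv (Wsub φ) (sig φ p) (sig φ q) = sig φ (p * q) := by
  funext z
  rw [dcConv]
  have h1 : ∀ c : (Multiplicative X ⋊[φ] W) ⧸ Wsub φ,
      sig φ p (Quotient.out c) * sig φ q ((Quotient.out c)⁻¹ * z)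
        = p.coeff (Quotient.out c).left * q.coeff ((Quotient.out c).left⁻¹ * z.left) := by
    intro c
    simp only [sig, mul_left, inv_left, inv_right]
    rw [← map_mul, hq]
  rw [finsum_congr h1]
  rw [finsum_eq_of_bijective _ (e_bij φ)
    (g := fun y : Multiplicative X => p.coeff y * q.coeff (y⁻¹ * z.left)) (fun c => rfl)]
  rw [finsum_eq_finset_sum_of_support_subset _ (s := p.coeff.support) ?_]
  · rw [sig, MonoidAlgebra.coeff_mul_apply_left, Finsupp.sum]
  · intro y hy
    simp only [Function.mem_support] at hy
    simp only [Finset.coe_sort_coe, Finset.mem_coe, Finsupp.mem_support_iff]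
    intro h0; rw [h0] at hy; simp at hy

open Classical in
lemma dcIndicator_eq [Finite W] (lam : X) :
    dcIndicator φ lam = fun wt : Multiplicative X ⋊[φ] W =>
      if wt.left ∈ Sorb φ lam then (1:ℚ) else 0 := by
  classical
  funext wt
  rw [dcIndicator, Set.indicator_apply]
  have hset : (wt ∈ {wt : Multiplicative X ⋊[φ] W | ∃ a b : W,
      wt = SemidirectProduct.inr a * SemidirectProduct.inl (Multiplicative.ofAdd lam) *
        SemidirectProduct.inr b}) ↔ wt.left ∈ Sorb φ lam := by
    constructor
    · rintro ⟨a, b, rfl⟩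
      exact ⟨a, by simp⟩
    · rintro ⟨w, hw⟩
      refine ⟨w, w⁻¹ * wt.right, ?_⟩
      ext
      · simp [hw]
      · simp
  rw [if_congr hset rfl rfl]
  simp

lemma sig_AvW [Finite W] (lam : X) : sig φ (AvW φ lam) = dcIndicator φ lam := by
  classical
  funext wt
  rw [sig, AvW_apply, dcIndicator_eq]

lemma ma_add_apply (p q : MonoidAlgebra ℚ (Multiplicative X)) (x : Multiplicative X) :
    (p + q).coeff x = p.coeff x + q.coeff x := Finsupp.add_apply p.coeff q.coeff x

lemma ma_sub_apply (p q : MonoidAlgebra ℚ (Multiplicative X)) (x : Multiplicative X) :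
    (p - q).coeff x = p.coeff x - q.coeff x := Finsupp.sub_apply p.coeff q.coeff x

lemma ma_smul_apply (c : ℚ) (p : MonoidAlgebra ℚ (Multiplicative X)) (x : Multiplicative X) :
    (c • p).coeff x = c * p.coeff x := by
  rw [show ((c • p).coeff x = c • p.coeff x) from Finsupp.smul_apply c p.coeff x]; rfl

end Aux

open SemidirectProduct in
/-- For a finite group `W` acting on an abelian group `X`, there is a well-defined injective
homomorphism of `ℚ`-algebras `σ : ℚ[X]^W → (ℚ[W\W̃/W], *_W)`, `W̃ = X ⋊ W`, with
`σ(Av_W(λ)) = 1_{WλW}` for every `λ ∈ X`; it is unique since the orbit sums `Av_W(λ)` span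
`ℚ[X]^W`. -/
theorem satake_type_embedding [Finite W] (φ : W →* MulAut (Multiplicative X)) :
    ∃ σ : MonoidAlgebra ℚ (Multiplicative X) → ((Multiplicative X ⋊[φ] W) → ℚ),
      (∀ p, WInvariant φ p → IsBiInvariant (Wsub φ) (Wsub φ) (σ p)) ∧
      (∀ p q, WInvariant φ p → WInvariant φ q → σ (p + q) = σ p + σ q) ∧
      (∀ (a : ℚ) (p), WInvariant φ p → σ (a • p) = a • σ p) ∧
      (∀ p q, WInvariant φ p → WInvariant φ q →
        σ (p * q) = dcConv (Wsub φ) (σ p) (σ q)) ∧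
      (σ 1 = Set.indicator ((Wsub φ : Subgroup (Multiplicative X ⋊[φ] W)) : Set _) 1) ∧
      (∀ p q, WInvariant φ p → WInvariant φ q → σ p = σ q → p = q) ∧
      (∀ lam : X, σ (AvW φ lam) = dcIndicator φ lam) ∧
      (∀ σ' : MonoidAlgebra ℚ (Multiplicative X) → ((Multiplicative X ⋊[φ] W) → ℚ),
        (∀ p q, WInvariant φ p → WInvariant φ q → σ' (p + q) = σ' p + σ' q) →
        (∀ (a : ℚ) (p), WInvariant φ p → σ' (a • p) = a • σ' p) →
        (∀ lam : X, σ' (AvW φ lam) = dcIndicator φ lam) →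
        ∀ p, WInvariant φ p → σ' p = σ p) := by
  classical
  refine ⟨sig φ, ?_, ?_, ?_, ?_, ?_, ?_, ?_, ?_⟩
  · -- bi-invariance
    intro p hp
    constructor
    · -- finite support
      have hinj : Function.Injective
          (fun wt : Multiplicative X ⋊[φ] W => (wt.left, wt.right)) := by
        intro a b h
        simp only [Prod.mk.injEq] at h
        exact SemidirectProduct.ext h.1 h.2
      have hfin : ((↑p.coeff.support : Set (Multiplicative X)) ×ˢ (Set.univ : Set W)).Finite :=
        (p.coeff.support.finite_toSet.prod Set.finite_univ)
      have hsub : Function.support (sig φ p) ⊆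
          (fun wt : Multiplicative X ⋊[φ] W => (wt.left, wt.right)) ⁻¹'
            ((↑p.coeff.support : Set (Multiplicative X)) ×ˢ (Set.univ : Set W)) := by
        intro wt hwt
        simp only [Function.mem_support, sig] at hwt
        simp [Finsupp.mem_support_iff, hwt]
      exact Set.Finite.subset (hfin.preimage hinj.injOn) hsub
    · rintro h ⟨a, rfl⟩ k ⟨b, rfl⟩ wt
      simp only [sig, mul_left, left_inr, right_inr, mul_one, map_one, one_mul]
      exact hp a wt.left
  · intro p q _ _; funext wt; simp [sig, ma_add_apply]
  · intro a p _; funext wt; simp [sig, ma_smul_apply]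
  · intro p q _ hq; rw [conv_eq φ p q hq]
  · funext wt
    rw [sig, MonoidAlgebra.one_def, MonoidAlgebra.coeff_single, Set.indicator_apply]
    rw [Finsupp.single_apply]
    by_cases h : wt.left = 1
    · rw [if_pos h.symm, if_pos]
      · rfl
      · exact (mem_Wsub φ wt).mpr h
    · rw [if_neg (fun hh => h hh.symm), if_neg]
      intro hmem
      exact h ((mem_Wsub φ wt).mp hmem)
  · intro p q _ _ h
    ext x
    have := congrFun h (inl x : Multiplicative X ⋊[φ] W)
    simpa [sig] using this
  · intro lam; exact sig_AvW φ lam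
  · -- uniqueness
    intro σ' hadd hsmul hAv
    have hzero_inv : WInvariant φ (0 : MonoidAlgebra ℚ (Multiplicative X)) := by
      intro w x; simp
    have hσ'0 : σ' 0 = 0 := by
      have := hsmul 0 0 hzero_inv
      simpa using this
    have key : ∀ n : ℕ, ∀ p : MonoidAlgebra ℚ (Multiplicative X), WInvariant φ p →
        p.coeff.support.card ≤ n → σ' p = sig φ p := by
      intro n
      induction n with
      | zero =>
        intro p _ hcard
        have : p = 0 := by
          rw [← MonoidAlgebra.coeff_eq_zero, ← Finsupp.support_eq_empty, ← Finset.card_eq_zero]; omega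
        rw [this, hσ'0]; funext wt; simp [sig]
      | succ n ih =>
        intro p hp hcard
        by_cases hp0 : p = 0
        · rw [hp0, hσ'0]; funext wt; simp [sig]
        · obtain ⟨x, hx⟩ := Finsupp.support_nonempty_iff.mpr (mt MonoidAlgebra.coeff_eq_zero.mp hp0)
          set lam : X := Multiplicative.toAdd x with hlam
          have hxlam : Multiplicative.ofAdd lam = x := rfl
          set c : ℚ := p.coeff x with hc
          have hc0 : c ≠ 0 := Finsupp.mem_support_iff.mp hx
          set q : MonoidAlgebra ℚ (Multiplicative X) := p - c • AvW φ lam with hqdef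
          have hAvInv := AvW_invariant φ lam
          have hcAvInv : WInvariant φ (c • AvW φ lam) := by
            intro w y
            rw [ma_smul_apply, ma_smul_apply, hAvInv w y]
          have hq_inv : WInvariant φ q := by
            intro w y
            rw [hqdef, ma_sub_apply, ma_sub_apply, hp w y, hcAvInv w y]
          have hSx : x ∈ Sorb φ lam := hxlam ▸ self_mem_Sorb φ lam
          have hq_supp : q.coeff.support ⊆ p.coeff.support.erase x := by
            intro y hy
            rw [Finsupp.mem_support_iff] at hy
            have hqy : q.coeff y = p.coeff y - c * (AvW φ lam).coeff y := by
              rw [hqdef, ma_sub_apply, ma_smul_apply]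
            by_cases hyS : y ∈ Sorb φ lam
            · exfalso
              have h1 : p.coeff y = c := by
                rw [hc, ← hxlam]
                exact invariant_const_on_Sorb φ p hp hyS
              rw [hqy, AvW_apply, if_pos hyS, h1] at hy
              simp at hy
            · have hyx : y ≠ x := fun h => hyS (h ▸ hSx)
              rw [hqy, AvW_apply, if_neg hyS] at hy
              simp only [mul_zero, sub_zero] at hy
              exact Finset.mem_erase.mpr ⟨hyx, Finsupp.mem_support_iff.mpr hy⟩
          have hcard' : q.coeff.support.card ≤ n := by
            have h1 : (p.coeff.support.erase x).card = p.coeff.support.card - 1 :=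
              Finset.card_erase_of_mem hx
            have h2 := Finset.card_le_card hq_supp
            have h3 : 1 ≤ p.coeff.support.card := Finset.card_pos.mpr ⟨x, hx⟩
            omega
          have hdecomp : p = q + c • AvW φ lam := by
            rw [hqdef]; abel
          have hσ'q := ih q hq_inv hcard'
          calc σ' p = σ' (q + c • AvW φ lam) := by rw [← hdecomp]
            _ = σ' q + σ' (c • AvW φ lam) := hadd q _ hq_inv hcAvInv
            _ = sig φ q + c • σ' (AvW φ lam) := by rw [hσ'q, hsmul c _ hAvInv]
            _ = sig φ q + c • sig φ (AvW φ lam) := by rw [hAv lam, sig_AvW φ lam]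
            _ = sig φ (q + c • AvW φ lam) := by
                  funext wt
                  simp only [sig, Pi.add_apply, Pi.smul_apply, ma_add_apply, ma_smul_apply,
                    smul_eq_mul]
            _ = sig φ p := by rw [← hdecomp]
    intro p hp
    exact key p.coeff.support.card p hp le_rfl
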